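/- Let a_0, a_1, ... be pairwise distinct elements of a field and define \binom{n}{k}_{\mathbf{a}} = (-1)^{n-k}\left(\prod_{i=0}^{n-1}(a_n - a_i)\right)/\prod_{i=0, i\neq k}^{n}(a_k - a_i) for 0 \le k \le n. Then for 0 < k < n+1 the recurrence \binom{n+1}{k}_{\mathbf{a}} = \left(\prod_{j=0}^{n-1}\frac{a_{n+1}-a_{j+1}}{a_n-a_j}\right) \binom{n}{k}_{\mathbf{a}} + \binom{n}{k-1}_{\mathbf{a}'} holds, where \mathbf{a}' denotes the shifted sequence a_1, a_2, a_3, .... -/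

import Mathlib

/-- The generalized a-binomial coefficient. -/
def abinom {F : Type*} [Field F] (a : ℕ → F) (n k : ℕ) : F :=
  (-1) ^ (n - k) * (∏ i ∈ Finset.range n, (a n - a i)) /
    ∏ i ∈ (Finset.range (n+1)).erase k, (a k - a i)

private lemma erase_shift {F : Type*} [Field F] (f : ℕ → F) (m k : ℕ) :
    ∏ i ∈ (Finset.range (m+1)).erase (k+1), f i
      = f 0 * ∏ i ∈ (Finset.range m).erase k, f (i+1) := by
  have h : (Finset.range (m+1)).erase (k+1)
      = insert 0 (((Finset.range m).erase k).image (· + 1)) := by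
    ext x
    simp only [Finset.mem_erase, Finset.mem_range, Finset.mem_insert, Finset.mem_image]
    constructor
    · rintro ⟨h1, h2⟩
      rcases Nat.eq_zero_or_pos x with h | h
      · exact Or.inl h
      · exact Or.inr ⟨x - 1, ⟨by omega, by omega⟩, by omega⟩
    · rintro (rfl | ⟨y, ⟨hy1, hy2⟩, rfl⟩) <;> omega
  rw [h, Finset.prod_insert (by simp), Finset.prod_image (by intro x _ y _ h; beta_reduce at h; omega)]

private lemma erase_top {F : Type*} [Field F] (f : ℕ → F) (m k : ℕ) (hk : k < m + 1) :
    ∏ i ∈ (Finset.range (m+2)).erase k, f i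
      = (∏ i ∈ (Finset.range (m+1)).erase k, f i) * f (m+1) := by
  have h : (Finset.range (m+2)).erase k
      = insert (m+1) ((Finset.range (m+1)).erase k) := by
    ext x
    simp only [Finset.mem_erase, Finset.mem_range, Finset.mem_insert]
    omega
  rw [h, Finset.prod_insert (by simp), mul_comm]

theorem stmt18 {F : Type*} [Field F] (a : ℕ → F)
    (hdist : ∀ i j : ℕ, i ≠ j → a i ≠ a j) (n k : ℕ) (hk : 0 < k) (hkn : k < n + 1) :
    abinom a (n+1) k =
      (∏ j ∈ Finset.range n, (a (n+1) - a (j+1)) / (a n - a j)) * abinom a n k +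
        abinom (fun i => a (i+1)) n (k-1) := by
  obtain ⟨k, rfl⟩ : ∃ k', k = k' + 1 := ⟨k - 1, by omega⟩
  have hkn' : k < n := by omega
  unfold abinom
  simp only [Nat.add_sub_cancel]
  set Pn := ∏ i ∈ Finset.range n, (a (n+1) - a (i+1)) with hPn
  set P0 := ∏ i ∈ Finset.range n, (a n - a i) with hP0
  set D0 := ∏ i ∈ (Finset.range (n+1)).erase (k+1), (a (k+1) - a i) with hD0
  set D1 := ∏ i ∈ (Finset.range (n+1)).erase k, (a (k+1) - a (i+1)) with hD1
  have hP0ne : P0 ≠ 0 := by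
    rw [hP0, Finset.prod_ne_zero_iff]
    intro i hi
    exact sub_ne_zero_of_ne (hdist n i (by simp at hi; omega))
  have hD0ne : D0 ≠ 0 := by
    rw [hD0, Finset.prod_ne_zero_iff]
    intro i hi
    simp only [Finset.mem_erase, Finset.mem_range] at hi
    exact sub_ne_zero_of_ne (hdist (k+1) i hi.1.symm)
  have hD1ne : D1 ≠ 0 := by
    rw [hD1, Finset.prod_ne_zero_iff]
    intro i hi
    simp only [Finset.mem_erase, Finset.mem_range] at hi
    exact sub_ne_zero_of_ne (hdist (k+1) (i+1) (by omega))
  have h0ne : a (k+1) - a 0 ≠ 0 := sub_ne_zero_of_ne (hdist (k+1) 0 (by omega))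
  have htne : a (k+1) - a (n+1) ≠ 0 := sub_ne_zero_of_ne (hdist (k+1) (n+1) (by omega))
  -- numerator of LHS
  have hnum : ∏ i ∈ Finset.range (n+1), (a (n+1) - a i) = Pn * (a (n+1) - a 0) :=
    Finset.prod_range_succ' _ n
  -- denominator of LHS, two ways
  have hden1 : ∏ i ∈ (Finset.range (n+2)).erase (k+1), (a (k+1) - a i)
      = D0 * (a (k+1) - a (n+1)) := erase_top _ n (k+1) (by omega)
  have hden2 : ∏ i ∈ (Finset.range (n+2)).erase (k+1), (a (k+1) - a i)
      = (a (k+1) - a 0) * D1 := erase_shift _ (n+1) k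
  have hC : ∏ j ∈ Finset.range n, (a (n+1) - a (j+1)) / (a n - a j) = Pn / P0 :=
    Finset.prod_div_distrib _ _
  have hkey : D1 = D0 * (a (k+1) - a (n+1)) / (a (k+1) - a 0) := by
    field_simp
    linear_combination hden2.symm.trans hden1
  have hsub : n + 1 - (k + 1) = (n - (k+1)) + 1 := by omega
  have hsub2 : n - k = (n - (k + 1)) + 1 := by omega
  rw [show n + 2 = (n+1) + 1 from rfl, hnum, hden1, hC, hkey, hsub, hsub2, pow_succ]
  field_simp
  ring
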